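/- Proposition 7, item 1: The weight vector α of the orthogonal projection procedure is a stationary vector of P: Matrix.vecMul α P = α (i.e., αᵀ P = αᵀ). -/

import Mathlib

open Filter Matrix

/-- Proposition 7, item 1: the weight vector `α` of the orthogonal projection
procedure is a stationary vector of `P`: `αᵀ P = αᵀ`. -/
theorem weight_vector_is_stationary
    (n : ℕ) (hn : 0 < n) (P Q : Matrix (Fin n) (Fin n) ℝ)
    (hPnonneg : ∀ i j, 0 ≤ P i j) (hProw : ∀ i, ∑ j, P i j = 1)
    (hconv : Tendsto (fun k => P ^ k) atTop (nhds Q))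
    (S : Matrix (Fin n) (Fin n) ℝ)
    (hSsym : Sᵀ = S) (hSidem : S * S = S)
    (hScol : {v | ∃ x : Fin n → ℝ, S.mulVec x = v} =
      {x | ∃ a : ℝ, ∀ i, Q.mulVec x i = a})
    (α : Fin n → ℝ) (hα : ∀ i j, (Q * S) i j = α j) :
    Matrix.vecMul α P = α := by
  -- Q * P = Q
  have hQP : Q * P = Q := by
    have h1 : Tendsto (fun k => P ^ k * P) atTop (nhds (Q * P)) :=
      hconv.mul tendsto_const_nhds
    have h2 : Tendsto (fun k => P ^ k * P) atTop (nhds Q) := by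
      have := hconv.comp (tendsto_add_atTop_nat 1)
      simpa [pow_succ, Function.comp_def] using this
    exact tendsto_nhds_unique h1 h2
  -- Q * Q = Q
  have hQQ : Q * Q = Q := by
    have h1 : Tendsto (fun k => P ^ k * P ^ k) atTop (nhds (Q * Q)) :=
      hconv.mul hconv
    have h2 : Tendsto (fun k => P ^ k * P ^ k) atTop (nhds Q) := by
      have hmono : Tendsto (fun k : ℕ => 2 * k) atTop atTop :=
        Tendsto.const_mul_atTop' two_pos tendsto_id
      have := hconv.comp hmono
      simpa [Function.comp_def, two_mul, pow_add] using this
    exact tendsto_nhds_unique h1 h2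
  set i0 : Fin n := ⟨0, hn⟩
  -- α annihilates the kernel of Q
  have key : ∀ x : Fin n → ℝ, Q.mulVec x = 0 → α ⬝ᵥ x = 0 := by
    intro x hx
    have hxT : x ∈ {x : Fin n → ℝ | ∃ a : ℝ, ∀ i, Q.mulVec x i = a} :=
      ⟨0, fun i => by rw [hx]; rfl⟩
    rw [← hScol] at hxT
    obtain ⟨y, hy⟩ := hxT
    have hSx : S.mulVec x = x := by
      rw [← hy, Matrix.mulVec_mulVec, hSidem]
    have : α ⬝ᵥ x = ((Q * S).mulVec x) i0 := by
      simp only [Matrix.mulVec, dotProduct]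
      exact Finset.sum_congr rfl fun j _ => by exact congrArg (· * x j) (hα i0 j).symm
    rw [this, ← Matrix.mulVec_mulVec, hSx, hx]
    rfl
  -- αᵀ Q = αᵀ
  have hαQ : Matrix.vecMul α Q = α := by
    funext j
    have hker : Q.mulVec (Q.mulVec (Pi.single j 1) - Pi.single j 1) = 0 := by
      rw [Matrix.mulVec_sub, Matrix.mulVec_mulVec, hQQ, sub_self]
    have h0 := key _ hker
    rw [dotProduct_sub, sub_eq_zero] at h0
    have h1 : α ⬝ᵥ Q.mulVec (Pi.single j 1) = Matrix.vecMul α Q j := by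
      simp [Matrix.vecMul, Matrix.mulVec, dotProduct, Finset.mul_sum,
        Pi.single_apply, mul_ite]
    have h2 : α ⬝ᵥ (Pi.single j 1 : Fin n → ℝ) = α j := by
      simp [dotProduct, Pi.single_apply]
    rw [h1, h2] at h0
    exact h0
  calc Matrix.vecMul α P = Matrix.vecMul (Matrix.vecMul α Q) P := by rw [hαQ]
    _ = Matrix.vecMul α (Q * P) := by rw [Matrix.vecMul_vecMul]
    _ = α := by rw [hQP, hαQ]
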